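/- If codim V^h = 2 and α : Λ²V → V is linear with α(u∧v) = 0 whenever u ∈ V^h and v ∈ V, then the cyclic sum α(u∧v)(w − h·w) + α(v∧w)(u − h·u) + α(w∧u)(v − h·v) vanishes in S(V) for all u,v,w ∈ V. -/

import Mathlib

open TensorProduct

/-- The image of the product `a·b ∈ S²(V)` under the (char ≠ 2) embedding
`S²(V) ↪ V ⊗ V`, `a·b ↦ a ⊗ b + b ⊗ a`. -/
noncomputable def symProd {F V : Type*} [Field F] [AddCommGroup V] [Module F V]
    (a b : V) : V ⊗[F] V := a ⊗ₜ[F] b + b ⊗ₜ[F] a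

/-- Bilinearity of `symProd` in the form needed below. -/
theorem symProd_bilin {F V : Type*} [Field F] [AddCommGroup V] [Module F V]
    (a s t : F) (M N0 N1 : V) :
    symProd (F := F) (a • M) (s • N0 + t • N1)
      = (a*s) • symProd M N0 + (a*t) • symProd M N1 := by
  simp only [symProd, tmul_add, add_tmul, smul_tmul, tmul_smul, smul_add, smul_smul]
  module

/-- If `codim V^h = 2` and `α(u∧v) = 0` whenever `u ∈ V^h` and `v ∈ V`, then the cyclic
sum `α(u∧v)(w - h·w) + α(v∧w)(u - h·u) + α(w∧u)(v - h·v)` vanishes in `S(V)`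
for all `u,v,w ∈ V`. -/
theorem stmt12 {F V : Type*} [Field F] [AddCommGroup V] [Module F V]
    [FiniteDimensional F V] (hchar : (2 : F) ≠ 0)
    (h : V ≃ₗ[F] V)
    (hcodim : Module.finrank F (V ⧸ LinearMap.ker (1 - (h : V →ₗ[F] V))) = 2)
    (α : V →ₗ[F] V →ₗ[F] V) (halt : ∀ u : V, α u u = 0)
    (hvan : ∀ u ∈ LinearMap.ker (1 - (h : V →ₗ[F] V)), ∀ v : V, α u v = 0) :
    ∀ u v w : V,
      symProd (α u v) (w - h w) + symProd (α v w) (u - h u) + symProd (α w u) (v - h v)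
        = (0 : V ⊗[F] V) := by
  set f : V →ₗ[F] V := 1 - (h : V →ₗ[F] V) with hf
  set K : Submodule F V := LinearMap.ker f with hK
  have skew : ∀ x y : V, α y x = - α x y := by
    intro x y
    have h0 := halt (x + y)
    simp only [map_add, LinearMap.add_apply, halt, zero_add, add_zero] at h0
    exact eq_neg_of_add_eq_zero_left h0
  have hvan' : ∀ x : V, ∀ y ∈ K, α x y = 0 := by
    intro x y hy
    rw [skew y x, hvan y hy x, neg_zero]
  -- basis of the quotient
  let b : Module.Basis (Fin 2) F (V ⧸ K) := Module.finBasisOfFinrankEq F _ hcodim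
  have esurj : ∀ i : Fin 2, ∃ x : V, Submodule.Quotient.mk x = b i :=
    fun i => Submodule.Quotient.mk_surjective K (b i)
  choose e he using esurj
  -- coordinates
  set c : V → Fin 2 → F := fun x i => b.repr (Submodule.Quotient.mk x) i with hc
  have hdecomp : ∀ x : V, x - (c x 0 • e 0 + c x 1 • e 1) ∈ K := by
    intro x
    have hsum : (c x 0 • b 0 + c x 1 • b 1 : V ⧸ K) = Submodule.Quotient.mk x := by
      have := b.sum_repr (Submodule.Quotient.mk x)
      rwa [Fin.sum_univ_two] at this
    rw [← Submodule.Quotient.mk_eq_zero]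
    simp only [Submodule.Quotient.mk_sub, Submodule.Quotient.mk_add,
      Submodule.Quotient.mk_smul, he, hsum, sub_self]
  have hrw : ∀ x : V, x = c x 0 • e 0 + c x 1 • e 1 + (x - (c x 0 • e 0 + c x 1 • e 1)) := by
    intro x; abel
  -- α in coordinates
  have hα : ∀ x y : V,
      α x y = (c x 0 * c y 1 - c x 1 * c y 0) • α (e 0) (e 1) := by
    intro x y
    conv_lhs => rw [hrw x, hrw y]
    simp only [map_add, map_smul, LinearMap.add_apply, LinearMap.smul_apply,
      halt, hvan _ (hdecomp x), hvan' _ _ (hdecomp y), skew (e 0) (e 1),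
      smul_zero, zero_add, add_zero, LinearMap.zero_apply]
    module
  -- f in coordinates
  have hfx : ∀ x : V, f x = c x 0 • f (e 0) + c x 1 • f (e 1) := by
    intro x
    conv_lhs => rw [hrw x]
    have : f (x - (c x 0 • e 0 + c x 1 • e 1)) = 0 := hdecomp x
    simp only [map_add, map_smul, this, add_zero]
  have hfx' : ∀ x : V, x - h x = f x := by
    intro x; simp [hf, LinearMap.sub_apply]
  intro u v w
  rw [hfx' u, hfx' v, hfx' w, hα u v, hα v w, hα w u, hfx u, hfx v, hfx w,
    symProd_bilin, symProd_bilin, symProd_bilin]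
  module
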